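/- Let (X,d) be a compact metric space and f : X → X continuous. For every x ∈ X, the ω-limit set ω(x,f) is weakly incompressible: for every nonempty, closed, proper subset M of ω(x,f), M ∩ cl(f(ω(x,f) \ M)) ≠ ∅. -/

import Mathlib

open Metric Set Filter Topology


def omegaLimitSet {X : Type*} [MetricSpace X] (f : X → X) (x : X) : Set X :=
  ⋂ k : ℕ, closure ((fun n => f^[n] x) '' Set.Ici k)

theorem omegaLimitSet_weaklyIncompressible {X : Type*} [MetricSpace X] [CompactSpace X]
    (f : X → X) (hf : Continuous f) (x : X) (M : Set X)
    (hMs : M ⊆ omegaLimitSet f x) (hMne : M.Nonempty) (hMc : IsClosed M)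
    (hMprop : M ≠ omegaLimitSet f x) :
    (M ∩ closure (f '' (omegaLimitSet f x \ M))).Nonempty := by
  classical
  set Ω := omegaLimitSet f x with hΩ
  set A := closure (f '' (Ω \ M)) with hA
  by_contra hcon
  rw [Set.not_nonempty_iff_eq_empty] at hcon
  -- the orbit approximates every point of Ω at arbitrarily large times
  have orbit_near : ∀ p ∈ Ω, ∀ k : ℕ, ∀ ε > 0, ∃ n ≥ k, dist (f^[n] x) p < ε := by
    intro p hp k ε hε
    have hp' : p ∈ closure ((fun n => f^[n] x) '' Set.Ici k) := Set.mem_iInter.1 hp k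
    rcases Metric.mem_closure_iff.1 hp' ε hε with ⟨b, hb, hd⟩
    rcases hb with ⟨n, hn, rfl⟩
    exact ⟨n, hn, by rwa [dist_comm]⟩
  -- Ω \ M is nonempty
  obtain ⟨y, hyΩ, hyM⟩ : (Ω \ M).Nonempty := by
    rcases Set.exists_of_ssubset (hMs.ssubset_of_ne hMprop) with ⟨y, hy, hyM⟩
    exact ⟨y, hy, hyM⟩
  have hAne : A.Nonempty := ⟨f y, subset_closure ⟨y, ⟨hyΩ, hyM⟩, rfl⟩⟩
  -- separation between M and A
  obtain ⟨ε, hε, hsep⟩ : ∃ ε > 0, ∀ p ∈ M, ∀ q ∈ A, 5 * ε ≤ dist p q := by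
    obtain ⟨p₀, hp₀, hmin⟩ := hMc.isCompact.exists_isMinOn hMne
      (continuous_infDist_pt A).continuousOn
    have hpos : 0 < infDist p₀ A := by
      rw [← isClosed_closure.notMem_iff_infDist_pos hAne]
      intro hmem
      have : (M ∩ A).Nonempty := ⟨p₀, hp₀, hmem⟩
      exact this.ne_empty hcon
    refine ⟨infDist p₀ A / 5, by linarith, fun p hp q hq => ?_⟩
    have h1 : infDist p₀ A ≤ infDist p A := hmin hp
    have h2 := infDist_le_dist_of_mem (x := p) hq
    linarith
  have lower : ∀ q ∈ A, 5 * ε ≤ infDist q M := by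
    intro q hq
    by_contra h
    rcases (infDist_lt_iff hMne).1 (not_le.1 h) with ⟨p, hp, hd⟩
    have := hsep p hp q hq
    rw [dist_comm] at hd
    linarith
  -- continuity of f at y
  obtain ⟨δ, hδ, hδ'⟩ := Metric.continuousAt_iff.1 (hf.continuousAt (x := y)) ε hε
  -- transition times: the orbit goes from far (≥ 2ε) to near (≤ 2ε) of M
  have trans : ∀ k : ℕ, ∃ m ≥ k,
      2 * ε ≤ infDist (f^[m] x) M ∧ infDist (f^[m + 1] x) M ≤ 2 * ε := by
    intro k
    obtain ⟨n, hn, hny⟩ := orbit_near y hyΩ k δ hδ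
    have hgt : 2 * ε ≤ infDist (f^[n + 1] x) M := by
      have h1 : dist (f^[n + 1] x) (f y) < ε := by
        rw [Function.iterate_succ_apply']
        exact hδ' hny
      have h2 : infDist (f y) M ≤ infDist (f^[n + 1] x) M + dist (f y) (f^[n + 1] x) :=
        infDist_le_infDist_add_dist
      have h3 : 5 * ε ≤ infDist (f y) M :=
        lower _ (subset_closure ⟨y, ⟨hyΩ, hyM⟩, rfl⟩)
      rw [dist_comm] at h1
      linarith
    obtain ⟨p, hp⟩ := hMne
    obtain ⟨s, hs, hsp⟩ := orbit_near p (hMs hp) (n + 2) ε hε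
    have hgs : infDist (f^[s] x) M < 2 * ε := by
      have := infDist_le_dist_of_mem (x := f^[s] x) hp
      linarith
    set P : ℕ → Prop := fun j => 2 * ε ≤ infDist (f^[j] x) M with hP
    have hts : n + 1 ≤ s := by omega
    set m := Nat.findGreatest P s with hm
    have hmge : n + 1 ≤ m := Nat.le_findGreatest hts hgt
    have hPm : P m := Nat.findGreatest_spec hts hgt
    have hms : m ≤ s := Nat.findGreatest_le s
    have hmlt : m < s := lt_of_le_of_ne hms (by
      intro h; rw [hP] at hPm; rw [h] at hPm; exact absurd hPm (not_le.2 hgs))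
    have hnot : ¬ P (m + 1) :=
      Nat.findGreatest_is_greatest (Nat.lt_succ_self m) hmlt
    exact ⟨m, by omega, hPm, (not_le.1 hnot).le⟩
  choose m hmge hmlo hmhi using trans
  have hmtop : Tendsto m atTop atTop := tendsto_atTop_mono hmge tendsto_id
  obtain ⟨w, -, φ, hφ, hconv⟩ :=
    isCompact_univ.tendsto_subseq (x := fun j => f^[m j] x) (fun j => Set.mem_univ _)
  -- w is in Ω
  have hwΩ : w ∈ Ω := by
    rw [hΩ, omegaLimitSet]
    refine Set.mem_iInter.2 fun k => ?_
    apply mem_closure_of_tendsto hconv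
    filter_upwards [(hmtop.comp hφ.tendsto_atTop).eventually_ge_atTop k] with j hj
    exact ⟨m (φ j), hj, rfl⟩
  -- w is 2ε-far from M
  have h1 : 2 * ε ≤ infDist w M :=
    ge_of_tendsto (((continuous_infDist_pt M).tendsto w).comp hconv)
      (Eventually.of_forall fun j => hmlo (φ j))
  have hwM : w ∉ M := fun hw => by
    rw [infDist_zero_of_mem hw] at h1; linarith
  -- f w is 2ε-close to M
  have hconv' : Tendsto (fun j => f^[m (φ j) + 1] x) atTop (𝓝 (f w)) := by
    have h := (hf.tendsto w).comp hconv
    simpa [Function.comp_def, Function.iterate_succ_apply'] using h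
  have h2 : infDist (f w) M ≤ 2 * ε :=
    le_of_tendsto (((continuous_infDist_pt M).tendsto (f w)).comp hconv')
      (Eventually.of_forall fun j => hmhi (φ j))
  -- but f w ∈ A, contradiction
  have hfwA : f w ∈ A := subset_closure ⟨w, ⟨hwΩ, hwM⟩, rfl⟩
  have := lower _ hfwA
  linarith
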